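/- Let B₁ ∈ ℝ^{K×K} be diagonalizable as B₁ = P_B D_B P_B⁻¹ with D_B diagonal, let U ∈ ℝ^{N×K} have orthonormal columns, and G = U B₁ Uᵀ + β₂ I_N with |β₂| + σ₁(B₁) < 1. Then for every complex z with |z| = 1, the matrix z I_N − G is invertible, and the smallest eigenvalue of (z I_N − G)*(z I_N − G) over all |z|=1 is at least (1 − |β₂| − σ₁(B₁))² σ_K(P_B)² σ_K(P_B⁻¹)², where σ_K denotes the smallest singular value. -/

import Mathlib

open Matrix

/-- Euclidean norm of a vector in `ℝ^n`. -/
noncomputable def enorm {n : ℕ} (x : Fin n → ℝ) : ℝ := Real.sqrt (∑ i, x i ^ 2)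

/-- Largest singular value (operator norm) of a real matrix. -/
noncomputable def sigma1 {m n : ℕ} (M : Matrix (Fin m) (Fin n) ℝ) : ℝ :=
  sSup ((fun x => _root_.enorm (M *ᵥ x)) '' {x | _root_.enorm x = 1})

/-- Smallest singular value of a real square matrix. -/
noncomputable def sigmaMin {n : ℕ} (M : Matrix (Fin n) (Fin n) ℝ) : ℝ :=
  sInf ((fun x => _root_.enorm (M *ᵥ x)) '' {x | _root_.enorm x = 1})

noncomputable def cnn {n : ℕ} (v : Fin n → ℂ) : ℝ := ‖(WithLp.equiv 2 (Fin n → ℂ)).symm v‖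

lemma cnn_eq {n : ℕ} (v : Fin n → ℂ) : cnn v = Real.sqrt (∑ i, ‖v i‖ ^ 2) := by
  rw [cnn, EuclideanSpace.norm_eq]
  simp [WithLp.equiv_symm_apply, PiLp.toLp_apply]

lemma cnn_nonneg {n : ℕ} (v : Fin n → ℂ) : 0 ≤ cnn v := norm_nonneg _

lemma cnn_sq {n : ℕ} (v : Fin n → ℂ) : cnn v ^ 2 = ∑ i, ‖v i‖ ^ 2 := by
  rw [cnn_eq, Real.sq_sqrt]
  positivity

lemma cnn_add_le {n : ℕ} (v w : Fin n → ℂ) : cnn (v + w) ≤ cnn v + cnn w := by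
  unfold cnn
  rw [WithLp.equiv_symm_apply, WithLp.toLp_add]
  exact norm_add_le _ _

lemma cnn_smul {n : ℕ} (z : ℂ) (v : Fin n → ℂ) : cnn (z • v) = ‖z‖ * cnn v := by
  unfold cnn
  rw [WithLp.equiv_symm_apply, WithLp.toLp_smul, norm_smul]

lemma cnn_eq_zero {n : ℕ} {v : Fin n → ℂ} : cnn v = 0 ↔ v = 0 := by
  unfold cnn
  rw [norm_eq_zero]
  constructor
  · intro h; funext i
    have := congrFun (WithLp.toLp_injective 2 h) i
    exact this
  · intro h; subst h; rfl

lemma cs_re {n : ℕ} (v w : Fin n → ℂ) : (star v ⬝ᵥ w).re ≤ cnn v * cnn w := by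
  have h : inner ℂ ((WithLp.equiv 2 (Fin n → ℂ)).symm v) ((WithLp.equiv 2 (Fin n → ℂ)).symm w) = star v ⬝ᵥ w :=
    (EuclideanSpace.inner_toLp_toLp v w).trans (dotProduct_comm _ _)
  have := norm_inner_le_norm (𝕜 := ℂ) ((WithLp.equiv 2 (Fin n → ℂ)).symm v) ((WithLp.equiv 2 (Fin n → ℂ)).symm w)
  rw [h] at this
  exact le_trans (Complex.re_le_norm _) this

lemma dot_self_eq {n : ℕ} (v : Fin n → ℂ) : star v ⬝ᵥ v = ((cnn v ^ 2 : ℝ) : ℂ) := by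
  rw [cnn_sq]
  push_cast
  simp [dotProduct, Complex.star_def, Complex.mul_conj']
  congr 1
  funext i
  rw [mul_comm, Complex.mul_conj]
  norm_cast
  rw [← Complex.sq_norm]

lemma enorm_eq_norm {n : ℕ} (x : Fin n → ℝ) :
    _root_.enorm x = ‖(WithLp.equiv 2 (Fin n → ℝ)).symm x‖ := by
  rw [_root_.enorm, EuclideanSpace.norm_eq]
  simp [WithLp.equiv_symm_apply, PiLp.toLp_apply, Real.norm_eq_abs, sq_abs]

lemma enorm_nonneg {n : ℕ} (x : Fin n → ℝ) : 0 ≤ _root_.enorm x := Real.sqrt_nonneg _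

lemma enorm_sq {n : ℕ} (x : Fin n → ℝ) : _root_.enorm x ^ 2 = ∑ i, x i ^ 2 := by
  rw [_root_.enorm, Real.sq_sqrt]; positivity

lemma vec_enorm_smul {n : ℕ} (c : ℝ) (x : Fin n → ℝ) : _root_.enorm (c • x) = |c| * _root_.enorm x := by
  rw [enorm_eq_norm, enorm_eq_norm, WithLp.equiv_symm_apply, WithLp.toLp_smul, norm_smul, Real.norm_eq_abs]

lemma vec_enorm_eq_zero {n : ℕ} {x : Fin n → ℝ} : _root_.enorm x = 0 ↔ x = 0 := by
  rw [enorm_eq_norm, norm_eq_zero]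
  constructor
  · intro h; funext i; exact congrFun (WithLp.toLp_injective 2 h) i
  · intro h; subst h; rfl

lemma sigma1_bddAbove {m n : ℕ} (M : Matrix (Fin m) (Fin n) ℝ) :
    BddAbove ((fun x => _root_.enorm (M *ᵥ x)) '' {x | _root_.enorm x = 1}) := by
  refine ⟨Real.sqrt (∑ i, ∑ j, M i j ^ 2), ?_⟩
  rintro r ⟨x, hx, rfl⟩
  have hx' : _root_.enorm x = 1 := hx
  have hx1 : ∑ j, x j ^ 2 = 1 := by
    simp only [_root_.enorm] at hx'
    exact (Real.sqrt_eq_one.mp hx')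
  simp only [_root_.enorm]
  apply Real.sqrt_le_sqrt
  calc ∑ i, (M *ᵥ x) i ^ 2 ≤ ∑ i, (∑ j, M i j ^ 2) * (∑ j, x j ^ 2) := by
        apply Finset.sum_le_sum
        intro i _
        have h := Finset.sum_mul_sq_le_sq_mul_sq Finset.univ (fun j => M i j) x
        simpa [mulVec, dotProduct] using h
    _ = ∑ i, ∑ j, M i j ^ 2 := by simp [hx1]

lemma sigma1_nonneg {m n : ℕ} (M : Matrix (Fin m) (Fin n) ℝ) : 0 ≤ sigma1 M := by
  rcases Nat.eq_zero_or_pos n with hn | hn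
  · subst hn
    have : {x : Fin 0 → ℝ | _root_.enorm x = 1} = ∅ := by
      ext x
      simp [_root_.enorm]
    rw [sigma1, this]
    simp [Real.sInf_empty, Real.sSup_empty]
  · have hx : _root_.enorm (Pi.single (⟨0, hn⟩ : Fin n) (1:ℝ)) = 1 := by
      simp only [_root_.enorm]
      rw [Real.sqrt_eq_one]
      have h1 : ∀ i : Fin n, (Pi.single (⟨0, hn⟩ : Fin n) (1:ℝ) : Fin n → ℝ) i ^ 2
          = if i = (⟨0, hn⟩ : Fin n) then (1:ℝ) else 0 := by
        intro i; by_cases h : i = (⟨0, hn⟩ : Fin n) <;> simp [Pi.single_apply, h]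
      simp [h1]
    refine le_csSup (sigma1_bddAbove M) ⟨_, hx, rfl⟩ |>.trans' ?_
    exact enorm_nonneg _

lemma enorm_mulVec_le {m n : ℕ} (M : Matrix (Fin m) (Fin n) ℝ) (x : Fin n → ℝ) :
    _root_.enorm (M *ᵥ x) ≤ sigma1 M * _root_.enorm x := by
  rcases eq_or_ne (_root_.enorm x) 0 with h0 | h0
  · have : x = 0 := vec_enorm_eq_zero.mp h0
    subst this
    simp [mulVec_zero, h0, vec_enorm_eq_zero.mpr rfl]
  · have hpos : 0 < _root_.enorm x := lt_of_le_of_ne (enorm_nonneg x) (Ne.symm h0)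
    have hu : _root_.enorm ((_root_.enorm x)⁻¹ • x) = 1 := by
      rw [vec_enorm_smul, abs_of_pos (by positivity), inv_mul_cancel₀ h0]
    have hle : _root_.enorm (M *ᵥ ((_root_.enorm x)⁻¹ • x)) ≤ sigma1 M :=
      le_csSup (sigma1_bddAbove M) ⟨_, hu, rfl⟩
    rw [mulVec_smul, vec_enorm_smul, abs_of_pos (by positivity)] at hle
    calc _root_.enorm (M *ᵥ x) = _root_.enorm x * ((_root_.enorm x)⁻¹ * _root_.enorm (M *ᵥ x)) := by
          field_simp
      _ ≤ _root_.enorm x * sigma1 M := by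
          apply mul_le_mul_of_nonneg_left hle (le_of_lt hpos)
      _ = sigma1 M * _root_.enorm x := mul_comm _ _

lemma normsq_complex (z : ℂ) : ‖z‖ ^ 2 = z.re ^ 2 + z.im ^ 2 := by
  rw [Complex.sq_norm, Complex.normSq_apply]; ring

lemma cnn_map_mulVec_le {m n : ℕ} (M : Matrix (Fin m) (Fin n) ℝ) (v : Fin n → ℂ) :
    cnn ((M.map (algebraMap ℝ ℂ)) *ᵥ v) ≤ sigma1 M * cnn v := by
  set vr : Fin n → ℝ := fun j => (v j).re with hvr
  set vi : Fin n → ℝ := fun j => (v j).im with hvi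
  have hre : ∀ i, (((M.map (algebraMap ℝ ℂ)) *ᵥ v) i).re = (M *ᵥ vr) i := by
    intro i
    simp [mulVec, dotProduct, Matrix.map_apply, Complex.re_sum, Complex.re_ofReal_mul, hvr]
  have him : ∀ i, (((M.map (algebraMap ℝ ℂ)) *ᵥ v) i).im = (M *ᵥ vi) i := by
    intro i
    simp [mulVec, dotProduct, Matrix.map_apply, Complex.im_sum, Complex.im_ofReal_mul, hvi]
  have key : cnn ((M.map (algebraMap ℝ ℂ)) *ᵥ v) ^ 2 ≤ (sigma1 M * cnn v) ^ 2 := by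
    rw [cnn_sq]
    have hterm : ∀ i ∈ Finset.univ, ‖((M.map (algebraMap ℝ ℂ)) *ᵥ v) i‖ ^ 2
        = (M *ᵥ vr) i ^ 2 + (M *ᵥ vi) i ^ 2 := by
      intro i _
      rw [normsq_complex, hre i, him i]
    rw [Finset.sum_congr rfl hterm, Finset.sum_add_distrib, ← enorm_sq, ← enorm_sq]
    have h1 := enorm_mulVec_le M vr
    have h2 := enorm_mulVec_le M vi
    have hs := sigma1_nonneg M
    have hv : _root_.enorm vr ^ 2 + _root_.enorm vi ^ 2 = cnn v ^ 2 := by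
      rw [enorm_sq, enorm_sq, cnn_sq, ← Finset.sum_add_distrib]
      exact Finset.sum_congr rfl fun i _ => (normsq_complex (v i)).symm
    have e1 : _root_.enorm (M *ᵥ vr) ^ 2 ≤ (sigma1 M * _root_.enorm vr) ^ 2 :=
      pow_le_pow_left₀ (enorm_nonneg _) h1 2
    have e2 : _root_.enorm (M *ᵥ vi) ^ 2 ≤ (sigma1 M * _root_.enorm vi) ^ 2 :=
      pow_le_pow_left₀ (enorm_nonneg _) h2 2
    have e3 : (sigma1 M) ^ 2 * (_root_.enorm vr ^ 2 + _root_.enorm vi ^ 2) = (sigma1 M) ^ 2 * cnn v ^ 2 := by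
      rw [hv]
    nlinarith [e1, e2, e3]
  calc cnn ((M.map (algebraMap ℝ ℂ)) *ᵥ v) = Real.sqrt (cnn ((M.map (algebraMap ℝ ℂ)) *ᵥ v) ^ 2) :=
        (Real.sqrt_sq (cnn_nonneg _)).symm
    _ ≤ Real.sqrt ((sigma1 M * cnn v) ^ 2) := Real.sqrt_le_sqrt key
    _ = sigma1 M * cnn v := Real.sqrt_sq (mul_nonneg (sigma1_nonneg M) (cnn_nonneg v))

lemma conjTranspose_map_real {m n : ℕ} (M : Matrix (Fin m) (Fin n) ℝ) :
    (M.map (algebraMap ℝ ℂ))ᴴ = Mᵀ.map (algebraMap ℝ ℂ) := by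
  ext i j
  simp [conjTranspose_apply, Matrix.map_apply, Complex.star_def, Complex.conj_ofReal]

lemma cnn_iso {N K : ℕ} (U : Matrix (Fin N) (Fin K) ℝ) (hU : Uᵀ * U = 1)
    (x : Fin K → ℂ) : cnn ((U.map (algebraMap ℝ ℂ)) *ᵥ x) = cnn x := by
  set Uc := U.map (algebraMap ℝ ℂ) with hUc
  have hprod : Ucᴴ * Uc = 1 := by
    rw [hUc, conjTranspose_map_real, ← Matrix.map_mul, hU]
    ext i j
    simp [Matrix.map_apply, Matrix.one_apply]
    split <;> simp
  have key : star (Uc *ᵥ x) ⬝ᵥ (Uc *ᵥ x) = star x ⬝ᵥ x := by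
    rw [star_mulVec, dotProduct_mulVec, vecMul_vecMul, hprod, vecMul_one]
  rw [dot_self_eq, dot_self_eq] at key
  have key2 : cnn (Uc *ᵥ x) ^ 2 = cnn x ^ 2 := by exact_mod_cast key
  calc cnn (Uc *ᵥ x) = Real.sqrt (cnn (Uc *ᵥ x) ^ 2) := (Real.sqrt_sq (cnn_nonneg _)).symm
    _ = Real.sqrt (cnn x ^ 2) := by rw [key2]
    _ = cnn x := Real.sqrt_sq (cnn_nonneg _)

lemma cnn_coiso {N K : ℕ} (U : Matrix (Fin N) (Fin K) ℝ) (hU : Uᵀ * U = 1)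
    (w : Fin N → ℂ) : cnn ((Uᵀ.map (algebraMap ℝ ℂ)) *ᵥ w) ≤ cnn w := by
  set Uc := U.map (algebraMap ℝ ℂ) with hUc
  set Vc := Uᵀ.map (algebraMap ℝ ℂ) with hVc
  have hVcH : Vcᴴ = Uc := by
    rw [hVc, conjTranspose_map_real, transpose_transpose]
  have h1 : star (Vc *ᵥ w) ⬝ᵥ (Vc *ᵥ w) = star w ⬝ᵥ (Uc *ᵥ (Vc *ᵥ w)) := by
    rw [star_mulVec, hVcH, ← dotProduct_mulVec]
  have h2 : cnn (Vc *ᵥ w) ^ 2 ≤ cnn w * cnn (Vc *ᵥ w) := by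
    have := cs_re w (Uc *ᵥ (Vc *ᵥ w))
    rw [cnn_iso U hU] at this
    calc cnn (Vc *ᵥ w) ^ 2 = (star (Vc *ᵥ w) ⬝ᵥ (Vc *ᵥ w)).re := by
          rw [dot_self_eq, Complex.ofReal_re]
      _ = (star w ⬝ᵥ (Uc *ᵥ (Vc *ᵥ w))).re := by rw [h1]
      _ ≤ cnn w * cnn (Vc *ᵥ w) := this
  rcases eq_or_lt_of_le (cnn_nonneg (Vc *ᵥ w)) with h0 | h0
  · rw [← h0]; exact cnn_nonneg w
  · nlinarith

lemma enorm_single {n : ℕ} (i : Fin n) : _root_.enorm (Pi.single i (1:ℝ)) = 1 := by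
  simp only [_root_.enorm]
  rw [Real.sqrt_eq_one]
  have h1 : ∀ j : Fin n, (Pi.single i (1:ℝ) : Fin n → ℝ) j ^ 2
      = if j = i then (1:ℝ) else 0 := by
    intro j; by_cases h : j = i <;> simp [Pi.single_apply, h]
  simp [h1]

lemma sigmaMin_nonneg {n : ℕ} (M : Matrix (Fin n) (Fin n) ℝ) : 0 ≤ sigmaMin M := by
  apply Real.sInf_nonneg
  rintro r ⟨x, _, rfl⟩
  exact enorm_nonneg _

lemma sigmaMin_le {n : ℕ} (M : Matrix (Fin n) (Fin n) ℝ) {x : Fin n → ℝ} (hx : _root_.enorm x = 1) :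
    sigmaMin M ≤ _root_.enorm (M *ᵥ x) := by
  apply csInf_le
  · refine ⟨0, ?_⟩
    rintro r ⟨y, _, rfl⟩
    exact enorm_nonneg _
  · exact ⟨x, hx, rfl⟩

lemma sigmaMin_prod_sq_le_one {K : ℕ} (P : Matrix (Fin K) (Fin K) ℝ) (hP : IsUnit P) :
    sigmaMin P ^ 2 * sigmaMin P⁻¹ ^ 2 ≤ 1 := by
  rcases Nat.eq_zero_or_pos K with hK | hK
  · subst hK
    have hempty : {x : Fin 0 → ℝ | _root_.enorm x = 1} = ∅ := by
      ext x; simp [_root_.enorm]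
    have : sigmaMin P = 0 := by
      rw [sigmaMin, hempty]
      simp [Real.sInf_empty]
    rw [this]
    norm_num
  · set e : Fin K → ℝ := Pi.single (⟨0, hK⟩ : Fin K) (1:ℝ) with he
    have he1 : _root_.enorm e = 1 := enorm_single _
    set y : Fin K → ℝ := P⁻¹ *ᵥ e with hy
    have hPy : P *ᵥ y = e := by
      rw [hy, mulVec_mulVec, Matrix.mul_nonsing_inv P ((Matrix.isUnit_iff_isUnit_det P).mp hP),
        one_mulVec]
    rcases eq_or_ne y 0 with h0 | h0
    · have h1 : sigmaMin P⁻¹ ≤ 0 := by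
        have := sigmaMin_le P⁻¹ he1
        rw [← hy, h0, vec_enorm_eq_zero.mpr rfl] at this
        exact this
      have h2 : sigmaMin P⁻¹ = 0 := le_antisymm h1 (sigmaMin_nonneg _)
      rw [h2]
      norm_num
    · have ht : 0 < _root_.enorm y := by
        rcases lt_or_eq_of_le (enorm_nonneg y) with h | h
        · exact h
        · exact absurd (vec_enorm_eq_zero.mp h.symm) h0
      set t := _root_.enorm y with htdef
      have hu1 : _root_.enorm (t⁻¹ • y) = 1 := by
        rw [vec_enorm_smul, abs_of_pos (by positivity), inv_mul_cancel₀ (ne_of_gt ht)]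
      have hs1 : sigmaMin P ≤ t⁻¹ := by
        have := sigmaMin_le P hu1
        rwa [mulVec_smul, hPy, vec_enorm_smul, abs_of_pos (by positivity : (0:ℝ) < t⁻¹), he1,
          mul_one] at this
      have hs2 : sigmaMin P⁻¹ ≤ t := by
        have := sigmaMin_le P⁻¹ he1
        rwa [← hy] at this
      have hprod : sigmaMin P * sigmaMin P⁻¹ ≤ 1 := by
        calc sigmaMin P * sigmaMin P⁻¹ ≤ t⁻¹ * t :=
              mul_le_mul hs1 hs2 (sigmaMin_nonneg _) (by positivity)
          _ = 1 := inv_mul_cancel₀ (ne_of_gt ht)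
      have h1 : (sigmaMin P * sigmaMin P⁻¹) ^ 2 ≤ 1 := by
        rw [← one_pow 2]
        exact pow_le_pow_left₀ (mul_nonneg (sigmaMin_nonneg _) (sigmaMin_nonneg _)) hprod 2
      calc sigmaMin P ^ 2 * sigmaMin P⁻¹ ^ 2 = (sigmaMin P * sigmaMin P⁻¹) ^ 2 := by ring
        _ ≤ 1 := h1

theorem mu_min_G_bound {N K : ℕ}
    (U : Matrix (Fin N) (Fin K) ℝ) (B₁ P D : Matrix (Fin K) (Fin K) ℝ) (β₂ : ℝ)
    (hU : Uᵀ * U = 1) (hB : B₁ = P * D * P⁻¹) (hD : D.IsDiag) (hP : IsUnit P)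
    (hstat : |β₂| + sigma1 B₁ < 1)
    (G : Matrix (Fin N) (Fin N) ℝ)
    (hG : G = U * B₁ * Uᵀ + β₂ • (1 : Matrix (Fin N) (Fin N) ℝ)) :
    ∀ z : ℂ, ‖z‖ = 1 →
      IsUnit (z • (1 : Matrix (Fin N) (Fin N) ℂ) - G.map (algebraMap ℝ ℂ)) ∧
      ∀ μ ∈ spectrum ℂ
          ((z • (1 : Matrix (Fin N) (Fin N) ℂ) - G.map (algebraMap ℝ ℂ))ᴴ *
            (z • (1 : Matrix (Fin N) (Fin N) ℂ) - G.map (algebraMap ℝ ℂ))),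
        (1 - |β₂| - sigma1 B₁) ^ 2 * sigmaMin P ^ 2 * sigmaMin P⁻¹ ^ 2 ≤ μ.re := by
  intro z hz
  set c : ℝ := 1 - |β₂| - sigma1 B₁ with hc
  have hcpos : 0 < c := by rw [hc]; linarith
  set Gc := G.map (algebraMap ℝ ℂ) with hGcdef
  set A := z • (1 : Matrix (Fin N) (Fin N) ℂ) - Gc with hA
  -- decomposition of Gc
  have hGc : Gc = (U.map (algebraMap ℝ ℂ)) * (B₁.map (algebraMap ℝ ℂ)) * (Uᵀ.map (algebraMap ℝ ℂ))
      + (β₂ : ℂ) • (1 : Matrix (Fin N) (Fin N) ℂ) := by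
    rw [hGcdef, hG, Matrix.map_add _ (fun a b => by push_cast; ring), Matrix.map_mul,
      Matrix.map_mul]
    congr 1
    ext i j
    by_cases h : i = j <;>
      simp [Matrix.map_apply, Matrix.smul_apply, Matrix.one_apply, h]
  -- A applied to a vector
  have hAv : ∀ w : Fin N → ℂ, A *ᵥ w = z • w - Gc *ᵥ w := by
    intro w
    rw [hA, sub_mulVec, smul_mulVec, one_mulVec]
  -- norm bound on Gc *ᵥ w
  have hGw : ∀ w : Fin N → ℂ, cnn (Gc *ᵥ w) ≤ (sigma1 B₁ + |β₂|) * cnn w := by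
    intro w
    rw [hGc, add_mulVec, smul_mulVec, one_mulVec]
    calc cnn ((U.map (algebraMap ℝ ℂ) * B₁.map (algebraMap ℝ ℂ) * Uᵀ.map (algebraMap ℝ ℂ)) *ᵥ w
            + (β₂ : ℂ) • w)
        ≤ cnn ((U.map (algebraMap ℝ ℂ) * B₁.map (algebraMap ℝ ℂ) * Uᵀ.map (algebraMap ℝ ℂ)) *ᵥ w)
          + cnn ((β₂ : ℂ) • w) := cnn_add_le _ _
      _ ≤ sigma1 B₁ * cnn w + |β₂| * cnn w := by
          apply add_le_add
          · rw [← mulVec_mulVec, ← mulVec_mulVec, cnn_iso U hU]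
            calc cnn ((B₁.map (algebraMap ℝ ℂ)) *ᵥ ((Uᵀ.map (algebraMap ℝ ℂ)) *ᵥ w))
                ≤ sigma1 B₁ * cnn ((Uᵀ.map (algebraMap ℝ ℂ)) *ᵥ w) := cnn_map_mulVec_le _ _
              _ ≤ sigma1 B₁ * cnn w :=
                  mul_le_mul_of_nonneg_left (cnn_coiso U hU w) (sigma1_nonneg B₁)
          · rw [cnn_smul]
            apply mul_le_mul_of_nonneg_right _ (cnn_nonneg w)
            rw [Complex.norm_real, Real.norm_eq_abs]
      _ = (sigma1 B₁ + |β₂|) * cnn w := by ring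
  -- lower bound for A *ᵥ w
  have hlow : ∀ w : Fin N → ℂ, c * cnn w ≤ cnn (A *ᵥ w) := by
    intro w
    have h1 : cnn (z • w) = cnn w := by rw [cnn_smul, hz, one_mul]
    have h2 : cnn (z • w) ≤ cnn (A *ᵥ w) + cnn (Gc *ᵥ w) := by
      have h3 := cnn_add_le (A *ᵥ w) (Gc *ᵥ w)
      have h5 : A *ᵥ w + Gc *ᵥ w = z • w := by rw [hAv w, sub_add_cancel]
      rwa [h5] at h3
    have h4 := hGw w
    rw [h1] at h2
    have h6 : c * cnn w = cnn w - (sigma1 B₁ + |β₂|) * cnn w := by rw [hc]; ring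
    linarith
  -- invertibility
  have hunit : IsUnit A := by
    rw [Matrix.isUnit_iff_isUnit_det, isUnit_iff_ne_zero]
    intro h0
    obtain ⟨v, hv0, hveq⟩ := Matrix.exists_mulVec_eq_zero_iff.mpr h0
    have hvpos : 0 < cnn v :=
      (cnn_nonneg v).lt_of_ne fun h => hv0 (cnn_eq_zero.mp h.symm)
    have := hlow v
    rw [hveq, cnn_eq_zero.mpr rfl] at this
    nlinarith
  refine ⟨hunit, ?_⟩
  intro μ hμ
  have hnu : ¬ IsUnit (μ • (1 : Matrix (Fin N) (Fin N) ℂ) - Aᴴ * A) := by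
    have h := spectrum.mem_iff.mp hμ
    rwa [Algebra.algebraMap_eq_smul_one] at h
  have hdet0 : (μ • (1 : Matrix (Fin N) (Fin N) ℂ) - Aᴴ * A).det = 0 := by
    by_contra h
    exact hnu ((Matrix.isUnit_iff_isUnit_det _).mpr (isUnit_iff_ne_zero.mpr h))
  obtain ⟨v, hv0, hveq⟩ := Matrix.exists_mulVec_eq_zero_iff.mpr hdet0
  have heig : (Aᴴ * A) *ᵥ v = μ • v := by
    rw [sub_mulVec, smul_mulVec, one_mulVec] at hveq
    have := sub_eq_zero.mp hveq
    exact this.symm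
  have hquad : star v ⬝ᵥ ((Aᴴ * A) *ᵥ v) = ((cnn (A *ᵥ v) ^ 2 : ℝ) : ℂ) := by
    rw [← mulVec_mulVec, dotProduct_mulVec, ← star_mulVec, dot_self_eq]
  have hval : ((cnn (A *ᵥ v) ^ 2 : ℝ) : ℂ) = μ * ((cnn v ^ 2 : ℝ) : ℂ) := by
    rw [← hquad, heig, dotProduct_smul, dot_self_eq, smul_eq_mul]
  have hre : cnn (A *ᵥ v) ^ 2 = μ.re * cnn v ^ 2 := by
    have h := congrArg Complex.re hval
    simpa [← Complex.ofReal_pow, Complex.ofReal_re, Complex.ofReal_im, Complex.mul_re] using h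
  have hvpos : 0 < cnn v :=
    (cnn_nonneg v).lt_of_ne fun h => hv0 (cnn_eq_zero.mp h.symm)
  have hge : c ^ 2 ≤ μ.re := by
    have h := hlow v
    have h2 : (c * cnn v) ^ 2 ≤ cnn (A *ᵥ v) ^ 2 :=
      pow_le_pow_left₀ (mul_nonneg hcpos.le (cnn_nonneg v)) h 2
    rw [hre] at h2
    have hv2 : 0 < cnn v ^ 2 := pow_pos hvpos 2
    nlinarith
  calc c ^ 2 * sigmaMin P ^ 2 * sigmaMin P⁻¹ ^ 2
      = c ^ 2 * (sigmaMin P ^ 2 * sigmaMin P⁻¹ ^ 2) := by ring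
    _ ≤ c ^ 2 * 1 := mul_le_mul_of_nonneg_left (sigmaMin_prod_sq_le_one P hP) (sq_nonneg c)
    _ = c ^ 2 := mul_one _
    _ ≤ μ.re := hge
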